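/- For n ≥ 2, the number of circular permutations of [n] avoiding both [1432] and [1324] equals 1 + binomial(n-1, 2). -/

import Mathlib

/-- `t` is order-isomorphic to the pattern `p` (entrywise order comparison). -/
def IsoTo (t p : List ℕ) : Prop :=
  t.length = p.length ∧ ∀ i j, i < t.length → j < t.length →
    (t.getD i 0 < t.getD j 0 ↔ p.getD i 0 < p.getD j 0)

/-- `σ` (linearly) contains the pattern `π`: some subsequence of `σ` is
order-isomorphic to `π`. -/
def LContains (σ π : List ℕ) : Prop := ∃ t, t.Sublist σ ∧ IsoTo t π

/-- The circular permutation `[σ]` contains the circular pattern `[π]`: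
some cyclic rotation of `σ` linearly contains `π`. -/
def CContains (σ π : List ℕ) : Prop := ∃ k, LContains (σ.rotate k) π

/-- Canonical representative of a circular permutation of `[n]`:
a permutation of `1,…,n` (in one-line list form) starting with `1`. -/
def IsCirc (n : ℕ) (l : List ℕ) : Prop :=
  l.Perm (List.range' 1 n) ∧ l.head? = some 1

open List

/-! ### Iso characterizations -/

section Iso
variable {a b c d : ℕ}

private lemma iso_fwd {t p : List ℕ} (h : IsoTo t p) (i j : ℕ)
    (hi : i < t.length) (hj : j < t.length) :
    (t.getD i 0 < t.getD j 0 ↔ p.getD i 0 < p.getD j 0) := h.2 i j hi hj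

lemma isoTo_1432 : IsoTo [a,b,c,d] [1,4,3,2] ↔ a < d ∧ d < c ∧ c < b := by
  constructor
  · rintro ⟨-, h⟩
    have h1 := h 0 3 (by norm_num) (by norm_num)
    have h2 := h 3 2 (by norm_num) (by norm_num)
    have h3 := h 2 1 (by norm_num) (by norm_num)
    norm_num [List.getD_cons_zero, List.getD_cons_succ] at h1 h2 h3
    exact ⟨h1, h2, h3⟩
  · rintro ⟨h1, h2, h3⟩
    refine ⟨rfl, ?_⟩
    intro i j hi hj
    simp only [List.length_cons, List.length_nil] at hi hj
    interval_cases i <;> interval_cases j <;>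
      norm_num [List.getD_cons_zero, List.getD_cons_succ] <;> omega

lemma isoTo_4321 : IsoTo [a,b,c,d] [4,3,2,1] ↔ d < c ∧ c < b ∧ b < a := by
  constructor
  · rintro ⟨-, h⟩
    have h1 := h 3 2 (by norm_num) (by norm_num)
    have h2 := h 2 1 (by norm_num) (by norm_num)
    have h3 := h 1 0 (by norm_num) (by norm_num)
    norm_num [List.getD_cons_zero, List.getD_cons_succ] at h1 h2 h3
    exact ⟨h1, h2, h3⟩
  · rintro ⟨h1, h2, h3⟩
    refine ⟨rfl, ?_⟩
    intro i j hi hj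
    simp only [List.length_cons, List.length_nil] at hi hj
    interval_cases i <;> interval_cases j <;>
      norm_num [List.getD_cons_zero, List.getD_cons_succ] <;> omega

lemma isoTo_3214 : IsoTo [a,b,c,d] [3,2,1,4] ↔ c < b ∧ b < a ∧ a < d := by
  constructor
  · rintro ⟨-, h⟩
    have h1 := h 2 1 (by norm_num) (by norm_num)
    have h2 := h 1 0 (by norm_num) (by norm_num)
    have h3 := h 0 3 (by norm_num) (by norm_num)
    norm_num [List.getD_cons_zero, List.getD_cons_succ] at h1 h2 h3
    exact ⟨h1, h2, h3⟩
  · rintro ⟨h1, h2, h3⟩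
    refine ⟨rfl, ?_⟩
    intro i j hi hj
    simp only [List.length_cons, List.length_nil] at hi hj
    interval_cases i <;> interval_cases j <;>
      norm_num [List.getD_cons_zero, List.getD_cons_succ] <;> omega

lemma isoTo_2143 : IsoTo [a,b,c,d] [2,1,4,3] ↔ b < a ∧ a < d ∧ d < c := by
  constructor
  · rintro ⟨-, h⟩
    have h1 := h 1 0 (by norm_num) (by norm_num)
    have h2 := h 0 3 (by norm_num) (by norm_num)
    have h3 := h 3 2 (by norm_num) (by norm_num)
    norm_num [List.getD_cons_zero, List.getD_cons_succ] at h1 h2 h3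
    exact ⟨h1, h2, h3⟩
  · rintro ⟨h1, h2, h3⟩
    refine ⟨rfl, ?_⟩
    intro i j hi hj
    simp only [List.length_cons, List.length_nil] at hi hj
    interval_cases i <;> interval_cases j <;>
      norm_num [List.getD_cons_zero, List.getD_cons_succ] <;> omega

lemma isoTo_1324 : IsoTo [a,b,c,d] [1,3,2,4] ↔ a < c ∧ c < b ∧ b < d := by
  constructor
  · rintro ⟨-, h⟩
    have h1 := h 0 2 (by norm_num) (by norm_num)
    have h2 := h 2 1 (by norm_num) (by norm_num)
    have h3 := h 1 3 (by norm_num) (by norm_num)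
    norm_num [List.getD_cons_zero, List.getD_cons_succ] at h1 h2 h3
    exact ⟨h1, h2, h3⟩
  · rintro ⟨h1, h2, h3⟩
    refine ⟨rfl, ?_⟩
    intro i j hi hj
    simp only [List.length_cons, List.length_nil] at hi hj
    interval_cases i <;> interval_cases j <;>
      norm_num [List.getD_cons_zero, List.getD_cons_succ] <;> omega

lemma isoTo_3241 : IsoTo [a,b,c,d] [3,2,4,1] ↔ d < b ∧ b < a ∧ a < c := by
  constructor
  · rintro ⟨-, h⟩
    have h1 := h 3 1 (by norm_num) (by norm_num)
    have h2 := h 1 0 (by norm_num) (by norm_num)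
    have h3 := h 0 2 (by norm_num) (by norm_num)
    norm_num [List.getD_cons_zero, List.getD_cons_succ] at h1 h2 h3
    exact ⟨h1, h2, h3⟩
  · rintro ⟨h1, h2, h3⟩
    refine ⟨rfl, ?_⟩
    intro i j hi hj
    simp only [List.length_cons, List.length_nil] at hi hj
    interval_cases i <;> interval_cases j <;>
      norm_num [List.getD_cons_zero, List.getD_cons_succ] <;> omega

lemma isoTo_2413 : IsoTo [a,b,c,d] [2,4,1,3] ↔ c < a ∧ a < d ∧ d < b := by
  constructor
  · rintro ⟨-, h⟩
    have h1 := h 2 0 (by norm_num) (by norm_num)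
    have h2 := h 0 3 (by norm_num) (by norm_num)
    have h3 := h 3 1 (by norm_num) (by norm_num)
    norm_num [List.getD_cons_zero, List.getD_cons_succ] at h1 h2 h3
    exact ⟨h1, h2, h3⟩
  · rintro ⟨h1, h2, h3⟩
    refine ⟨rfl, ?_⟩
    intro i j hi hj
    simp only [List.length_cons, List.length_nil] at hi hj
    interval_cases i <;> interval_cases j <;>
      norm_num [List.getD_cons_zero, List.getD_cons_succ] <;> omega

lemma isoTo_4132 : IsoTo [a,b,c,d] [4,1,3,2] ↔ b < d ∧ d < c ∧ c < a := by
  constructor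
  · rintro ⟨-, h⟩
    have h1 := h 1 3 (by norm_num) (by norm_num)
    have h2 := h 3 2 (by norm_num) (by norm_num)
    have h3 := h 2 0 (by norm_num) (by norm_num)
    norm_num [List.getD_cons_zero, List.getD_cons_succ] at h1 h2 h3
    exact ⟨h1, h2, h3⟩
  · rintro ⟨h1, h2, h3⟩
    refine ⟨rfl, ?_⟩
    intro i j hi hj
    simp only [List.length_cons, List.length_nil] at hi hj
    interval_cases i <;> interval_cases j <;>
      norm_num [List.getD_cons_zero, List.getD_cons_succ] <;> omega

end Iso

/-! ### Rotation lemma -/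

lemma isoTo_rotate {t p : List ℕ} (h : IsoTo t p) (m : ℕ) :
    IsoTo (t.rotate m) (p.rotate m) := by
  obtain ⟨hlen, hcmp⟩ := h
  refine ⟨by simp [hlen], ?_⟩
  intro i j hi hj
  simp only [List.length_rotate] at hi hj
  have hL : 0 < t.length := lt_of_le_of_lt (Nat.zero_le _) hi
  have hi' : (i + m) % t.length < t.length := Nat.mod_lt _ hL
  have hj' : (j + m) % t.length < t.length := Nat.mod_lt _ hL
  have key := hcmp _ _ hi' hj'
  rw [List.getD_eq_getElem _ _ hi', List.getD_eq_getElem _ _ hj',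
      List.getD_eq_getElem _ _ (hlen ▸ hi'), List.getD_eq_getElem _ _ (hlen ▸ hj')] at key
  rw [List.getD_eq_getElem _ _ (by simpa using hi), List.getD_eq_getElem _ _ (by simpa using hj),
      List.getD_eq_getElem _ _ (by simp only [List.length_rotate]; omega),
      List.getD_eq_getElem _ _ (by simp only [List.length_rotate]; omega),
      List.getElem_rotate, List.getElem_rotate, List.getElem_rotate, List.getElem_rotate]
  simp only [← hlen]
  exact key

lemma lcontains_rotate {l π : List ℕ} {k : ℕ}
    (h : LContains (l.rotate k) π) : ∃ m, LContains l (π.rotate m) := by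
  obtain ⟨t, hsub, hiso⟩ := h
  rcases eq_or_ne l [] with rfl | hne
  · simp only [List.rotate_nil, List.sublist_nil] at hsub
    subst hsub
    exact ⟨0, [], List.nil_sublist _, by rwa [List.rotate_zero]⟩
  · have hL : 0 < l.length := List.length_pos_iff.mpr hne
    rw [← List.rotate_mod] at hsub
    have hk' : k % l.length ≤ l.length := (Nat.mod_lt _ hL).le
    rw [List.rotate_eq_drop_append_take hk'] at hsub
    obtain ⟨t₁, t₂, rfl, h₁, h₂⟩ := List.sublist_append_iff.mp hsub
    refine ⟨t₁.length, t₂ ++ t₁, ?_, ?_⟩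
    · have := h₂.append h₁
      rwa [List.take_append_drop] at this
    · have : (t₁ ++ t₂).rotate t₁.length = t₂ ++ t₁ := by
        rw [List.rotate_eq_drop_append_take (by simp), List.drop_left, List.take_left]
      rw [← this]
      exact isoTo_rotate hiso _

/-! ### Linear avoidance of 321 and 213 -/

/-- `l` has no (linear) occurrence of the patterns 321 and 213. -/
def Av (l : List ℕ) : Prop :=
  (¬ ∃ x y z, [x,y,z] <+ l ∧ z < y ∧ y < x) ∧ (¬ ∃ x y z, [x,y,z] <+ l ∧ y < x ∧ x < z)

private lemma quad_of_lcontains {l p : List ℕ} (hp : p.length = 4) (h : LContains l p) :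
    ∃ a b c d, [a,b,c,d] <+ l ∧ IsoTo [a,b,c,d] p := by
  obtain ⟨t, hsub, hiso⟩ := h
  have hlen : t.length = 4 := hiso.1.trans hp
  match t, hlen with
  | [a,b,c,d], _ => exact ⟨a, b, c, d, hsub, hiso⟩

private lemma sub_abc {a b c d : ℕ} : [a,b,c] <+ [a,b,c,d] :=
  (List.nil_sublist [d]).cons₂ c |>.cons₂ b |>.cons₂ a

private lemma sub_bcd {a b c d : ℕ} : [b,c,d] <+ [a,b,c,d] :=
  List.sublist_cons_self a [b,c,d]

private lemma sub_abd {a b c d : ℕ} : [a,b,d] <+ [a,b,c,d] :=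
  (List.sublist_cons_self c [d]).cons₂ b |>.cons₂ a

private lemma sub_acd {a b c d : ℕ} : [a,c,d] <+ [a,b,c,d] :=
  (List.sublist_cons_self b [c,d]).cons₂ a

/-- If `l` avoids 321 and 213 linearly then it avoids both circular patterns. -/
lemma not_ccontains_of_av {l : List ℕ} (h : Av l) :
    ¬ CContains l [1,4,3,2] ∧ ¬ CContains l [1,3,2,4] := by
  obtain ⟨H321, H213⟩ := h
  constructor
  · rintro ⟨k, hk⟩
    obtain ⟨m, hm⟩ := lcontains_rotate hk
    rw [← List.rotate_mod] at hm
    have h4 : ([1,4,3,2] : List ℕ).length = 4 := rfl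
    rw [h4] at hm
    have hlt : m % 4 < 4 := Nat.mod_lt _ (by norm_num)
    interval_cases h : m % 4
    · rw [show ([1,4,3,2] : List ℕ).rotate 0 = [1,4,3,2] from by decide] at hm
      obtain ⟨a, b, c, d, hsub, hiso⟩ := quad_of_lcontains (by norm_num) hm
      obtain ⟨h1, h2, h3⟩ := isoTo_1432.mp hiso
      exact H321 ⟨b, c, d, sub_bcd.trans hsub, h2, h3⟩
    · rw [show ([1,4,3,2] : List ℕ).rotate 1 = [4,3,2,1] from by decide] at hm
      obtain ⟨a, b, c, d, hsub, hiso⟩ := quad_of_lcontains (by norm_num) hm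
      obtain ⟨h1, h2, h3⟩ := isoTo_4321.mp hiso
      exact H321 ⟨a, b, c, sub_abc.trans hsub, h2, h3⟩
    · rw [show ([1,4,3,2] : List ℕ).rotate 2 = [3,2,1,4] from by decide] at hm
      obtain ⟨a, b, c, d, hsub, hiso⟩ := quad_of_lcontains (by norm_num) hm
      obtain ⟨h1, h2, h3⟩ := isoTo_3214.mp hiso
      exact H321 ⟨a, b, c, sub_abc.trans hsub, h1, h2⟩
    · rw [show ([1,4,3,2] : List ℕ).rotate 3 = [2,1,4,3] from by decide] at hm
      obtain ⟨a, b, c, d, hsub, hiso⟩ := quad_of_lcontains (by norm_num) hm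
      obtain ⟨h1, h2, h3⟩ := isoTo_2143.mp hiso
      exact H213 ⟨a, b, c, sub_abc.trans hsub, h1, by omega⟩
  · rintro ⟨k, hk⟩
    obtain ⟨m, hm⟩ := lcontains_rotate hk
    rw [← List.rotate_mod] at hm
    have h4 : ([1,3,2,4] : List ℕ).length = 4 := rfl
    rw [h4] at hm
    have hlt : m % 4 < 4 := Nat.mod_lt _ (by norm_num)
    interval_cases h : m % 4
    · rw [show ([1,3,2,4] : List ℕ).rotate 0 = [1,3,2,4] from by decide] at hm
      obtain ⟨a, b, c, d, hsub, hiso⟩ := quad_of_lcontains (by norm_num) hm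
      obtain ⟨h1, h2, h3⟩ := isoTo_1324.mp hiso
      exact H213 ⟨b, c, d, sub_bcd.trans hsub, h2, h3⟩
    · rw [show ([1,3,2,4] : List ℕ).rotate 1 = [3,2,4,1] from by decide] at hm
      obtain ⟨a, b, c, d, hsub, hiso⟩ := quad_of_lcontains (by norm_num) hm
      obtain ⟨h1, h2, h3⟩ := isoTo_3241.mp hiso
      exact H321 ⟨a, b, d, sub_abd.trans hsub, h1, h2⟩
    · rw [show ([1,3,2,4] : List ℕ).rotate 2 = [2,4,1,3] from by decide] at hm
      obtain ⟨a, b, c, d, hsub, hiso⟩ := quad_of_lcontains (by norm_num) hm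
      obtain ⟨h1, h2, h3⟩ := isoTo_2413.mp hiso
      exact H213 ⟨a, c, d, sub_acd.trans hsub, h1, h2⟩
    · rw [show ([1,3,2,4] : List ℕ).rotate 3 = [4,1,3,2] from by decide] at hm
      obtain ⟨a, b, c, d, hsub, hiso⟩ := quad_of_lcontains (by norm_num) hm
      obtain ⟨h1, h2, h3⟩ := isoTo_4132.mp hiso
      exact H321 ⟨a, c, d, sub_acd.trans hsub, h2, h3⟩

/-- Conversely: for a permutation of `1..n` starting with `1`, circular avoidance
forces linear avoidance of 321 and 213. -/
lemma av_of_not_ccontains {n : ℕ} {l : List ℕ} (hperm : l.Perm (range' 1 n))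
    (hhead : l.head? = some 1)
    (h1 : ¬ CContains l [1,4,3,2]) (h2 : ¬ CContains l [1,3,2,4]) : Av l := by
  obtain ⟨l₀, rfl⟩ : ∃ t, l = 1 :: t := by
    cases l with
    | nil => simp at hhead
    | cons x t =>
      simp only [List.head?_cons, Option.some.injEq] at hhead
      exact ⟨t, by rw [hhead]⟩
  have hnodup : (1 :: l₀).Nodup := hperm.nodup_iff.mpr (List.nodup_range' (s := 1) (n := n))
  have h1notin : (1 : ℕ) ∉ l₀ := (List.nodup_cons.mp hnodup).1
  have hge : ∀ x ∈ l₀, 2 ≤ x := by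
    intro x hx
    have hx1 : x ∈ (1 :: l₀) := List.mem_cons_of_mem _ hx
    have := hperm.subset hx1
    rw [List.mem_range'] at this
    obtain ⟨i, hi, rfl⟩ := this
    rcases Nat.eq_zero_or_pos i with rfl | hpos
    · simp at hx; exact absurd hx h1notin
    · omega
  constructor
  · rintro ⟨x, y, z, hsub, hzy, hyx⟩
    rcases List.sublist_cons_iff.mp hsub with hsub' | ⟨r, hr, hrsub⟩
    · have hz : z ∈ l₀ := hsub'.subset (by simp)
      have hz2 := hge z hz
      refine h1 ⟨0, [1, x, y, z], ?_, isoTo_1432.mpr ⟨by omega, hzy, hyx⟩⟩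
      rw [List.rotate_zero]
      exact hsub'.cons₂ 1
    · simp only [List.cons.injEq] at hr
      omega
  · rintro ⟨x, y, z, hsub, hyx, hxz⟩
    rcases List.sublist_cons_iff.mp hsub with hsub' | ⟨r, hr, hrsub⟩
    · have hy : y ∈ l₀ := hsub'.subset (by simp)
      have hy2 := hge y hy
      refine h2 ⟨0, [1, x, y, z], ?_, isoTo_1324.mpr ⟨by omega, hyx, hxz⟩⟩
      rw [List.rotate_zero]
      exact hsub'.cons₂ 1
    · have he : x = 1 ∧ [y, z] = r := by simpa using hr
      have hy : y ∈ l₀ := hrsub.subset (he.2 ▸ List.mem_cons_self (a := y) (l := [z]))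
      have := hge y hy
      omega

/-! ### The family of avoiders -/

/-- `Fm n a b = [1..a, b..n, a+1..b-1]`. -/
def Fm (n a b : ℕ) : List ℕ :=
  range' 1 a ++ range' b (n + 1 - b) ++ range' (a + 1) (b - 1 - a)

private lemma mem_range1 {u s k : ℕ} (h : u ∈ range' s k) : s ≤ u ∧ u < s + k := by
  rw [List.mem_range'] at h
  obtain ⟨i, hi, rfl⟩ := h
  omega

private lemma range1_concat (s k : ℕ) : range' s (k + 1) = range' s k ++ [s + k] := by
  simpa using List.range'_concat (step := 1) (s := s) (n := k)

private lemma range1_append (s m k : ℕ) : range' s m ++ range' (s + m) k = range' s (m + k) := by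
  simpa [Nat.add_comm k m] using List.range'_append s m k 1

lemma Fm_perm {n a b : ℕ} (ha : 1 ≤ a) (hab : a + 2 ≤ b) (hb : b ≤ n + 1) :
    (Fm n a b).Perm (range' 1 n) := by
  have e1 : range' 1 a ++ range' (a + 1) (b - 1 - a) = range' 1 (b - 1) := by
    have h := range1_append 1 a (b - 1 - a)
    rw [show 1 + a = a + 1 from by omega] at h
    rw [h]; congr 1; omega
  have e2 : range' 1 (b - 1) ++ range' b (n + 1 - b) = range' 1 n := by
    have h := range1_append 1 (b - 1) (n + 1 - b)
    rw [show 1 + (b - 1) = b from by omega] at h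
    rw [h]; congr 1; omega
  calc Fm n a b
      ~ range' 1 a ++ (range' (a + 1) (b - 1 - a) ++ range' b (n + 1 - b)) := by
        rw [Fm, List.append_assoc]; exact (List.perm_append_comm).append_left _
    _ = range' 1 n := by rw [← List.append_assoc, e1, e2]

lemma Fm_head {n a b : ℕ} (ha : 1 ≤ a) : (Fm n a b).head? = some 1 := by
  obtain ⟨a', rfl⟩ : ∃ a', a = a' + 1 := ⟨a - 1, by omega⟩
  simp [Fm, List.range'_succ]

/-- The pairwise relation that `Fm n a b` satisfies. -/
private def RelF (a b u v : ℕ) : Prop :=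
  (u < v ∨ (b ≤ u ∧ a + 1 ≤ v ∧ v < b)) ∧ ¬(a + 1 ≤ u ∧ u < b ∧ b ≤ v)

lemma Fm_pairwise {n a b : ℕ} (hab : a + 2 ≤ b) :
    (Fm n a b).Pairwise (RelF a b) := by
  have pwA : (range' 1 a).Pairwise (RelF a b) := by
    refine (List.pairwise_lt_range' (s := 1) (n := a)).imp_of_mem ?_
    intro u v hu hv huv
    have h1 := mem_range1 hu; have h2 := mem_range1 hv
    exact ⟨Or.inl huv, by omega⟩
  have pwB : (range' b (n + 1 - b)).Pairwise (RelF a b) := by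
    refine (List.pairwise_lt_range' (s := b) (n := n + 1 - b)).imp_of_mem ?_
    intro u v hu hv huv
    have h1 := mem_range1 hu; have h2 := mem_range1 hv
    exact ⟨Or.inl huv, by omega⟩
  have pwC : (range' (a + 1) (b - 1 - a)).Pairwise (RelF a b) := by
    refine (List.pairwise_lt_range' (s := a + 1) (n := b - 1 - a)).imp_of_mem ?_
    intro u v hu hv huv
    have h1 := mem_range1 hu; have h2 := mem_range1 hv
    exact ⟨Or.inl huv, by omega⟩
  rw [Fm, List.append_assoc, List.pairwise_append]
  refine ⟨pwA, ?_, ?_⟩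
  · rw [List.pairwise_append]
    refine ⟨pwB, pwC, ?_⟩
    intro u hu v hv
    have h1 := mem_range1 hu; have h2 := mem_range1 hv
    exact ⟨Or.inr (by omega), by omega⟩
  · intro u hu v hv
    have h1 := mem_range1 hu
    rcases List.mem_append.mp hv with hv' | hv'
    · have h2 := mem_range1 hv'
      exact ⟨Or.inl (by omega), by omega⟩
    · have h2 := mem_range1 hv'
      exact ⟨Or.inl (by omega), by omega⟩

private lemma triple_rel {l : List ℕ} {R : ℕ → ℕ → Prop} {x y z : ℕ}
    (hsub : [x,y,z] <+ l) (hpw : l.Pairwise R) : R x y ∧ R x z ∧ R y z := by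
  have := hpw.sublist hsub
  simp only [List.pairwise_cons, List.mem_cons, List.mem_singleton, List.not_mem_nil] at this
  obtain ⟨h1, h2, -⟩ := this
  exact ⟨h1 y (Or.inl rfl), h1 z (Or.inr (Or.inl rfl)), h2 z (Or.inl rfl)⟩

lemma Fm_av {n a b : ℕ} (hab : a + 2 ≤ b) : Av (Fm n a b) := by
  have hpw := Fm_pairwise (n := n) hab
  constructor
  · rintro ⟨x, y, z, hsub, hzy, hyx⟩
    obtain ⟨hxy, hxz, hyz⟩ := triple_rel hsub hpw
    simp only [RelF] at hxy hxz hyz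
    omega
  · rintro ⟨x, y, z, hsub, hyx, hxz⟩
    obtain ⟨hxy, hxz, hyz⟩ := triple_rel hsub hpw
    simp only [RelF] at hxy hxz hyz
    omega

lemma Fm_eq_id {n : ℕ} (hn : 1 ≤ n) : Fm n (n - 1) (n + 1) = range' 1 n := by
  have h := range1_concat 1 (n - 1)
  rw [show n - 1 + 1 = n from by omega, show 1 + (n - 1) = n from by omega] at h
  rw [Fm, show n + 1 - (n + 1) = 0 from by omega,
    show n + 1 - 1 - (n - 1) = 1 from by omega, show n - 1 + 1 = n from by omega]
  simp [h]

/-- Classification: avoiders are exactly the `Fm n a b`. -/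
lemma classify (n : ℕ) (hn : 2 ≤ n) :
    ∀ l : List ℕ, l.Perm (range' 1 n) → l.head? = some 1 → Av l →
    ∃ a b, 1 ≤ a ∧ a + 2 ≤ b ∧ b ≤ n + 1 ∧ (b ≤ n ∨ (a = n - 1 ∧ b = n + 1)) ∧
      l = Fm n a b := by
  induction n, hn using Nat.le_induction with
  | base =>
    intro l hperm hhead _hav
    have hlen : l.length = 2 := by simpa using hperm.length_eq
    obtain ⟨x, y, rfl⟩ := List.length_eq_two.mp hlen
    have hx : x = 1 := by simpa using hhead
    subst hx
    have h2 : (2:ℕ) ∈ [1, y] := hperm.mem_iff.mpr (by decide)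
    have hy : y = 2 := by
      have := (by simpa using h2 : 2 = 1 ∨ 2 = y).resolve_left (by omega)
      omega
    subst hy
    exact ⟨1, 3, by omega, by omega, by omega, Or.inr ⟨rfl, rfl⟩, by decide⟩
  | succ n hn IH =>
    intro l hperm hhead hav
    obtain ⟨H321, H213⟩ := hav
    have hnodup : l.Nodup := hperm.nodup_iff.mpr (List.nodup_range' (s := 1) (n := n+1))
    have hmem : (n + 1) ∈ l := hperm.mem_iff.mpr
      (List.mem_range'.mpr ⟨n, by omega, by omega⟩)
    obtain ⟨u, v, rfl⟩ := List.append_of_mem hmem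
    have hnodup' := hnodup
    rw [List.nodup_append] at hnodup'
    obtain ⟨hnu, hnv', hdisj⟩ := hnodup'
    have hnotu : (n+1) ∉ u := fun h => hdisj _ h _ List.mem_cons_self rfl
    have hnotv : (n+1) ∉ v := (List.nodup_cons.mp hnv').1
    have hvnd : v.Nodup := (List.nodup_cons.mp hnv').2
    have hboundl : ∀ x ∈ u ++ (n+1) :: v, x < n + 2 := by
      intro x hx
      have hx2 := mem_range1 (hperm.subset hx)
      omega
    have hu_lt : ∀ x ∈ u, x < n + 1 := by
      intro x hx
      have h1 := hboundl x (List.mem_append_left _ hx)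
      have : x ≠ n + 1 := fun h => hnotu (h ▸ hx)
      omega
    have hv_lt : ∀ x ∈ v, x < n + 1 := by
      intro x hx
      have h1 := hboundl x (List.mem_append_right _ (List.mem_cons_of_mem _ hx))
      have : x ≠ n + 1 := fun h => hnotv (h ▸ hx)
      omega
    have hu_inc : u.Pairwise (· < ·) := by
      rw [List.pairwise_iff_forall_sublist]
      intro x y hxy
      by_contra hlt
      push_neg at hlt
      have hne : x ≠ y := by
        have := hxy.nodup hnu
        simp at this
        exact this
      have hylt : y < x := by omega
      have hx_lt := hu_lt x (hxy.subset (by simp))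
      refine H213 ⟨x, y, n+1, ?_, hylt, by omega⟩
      have h1 : [x, y] ++ [n+1] <+ u ++ (n+1) :: v :=
        hxy.append ((List.nil_sublist v).cons₂ (n+1))
      simpa using h1
    have hv_inc : v.Pairwise (· < ·) := by
      rw [List.pairwise_iff_forall_sublist]
      intro x y hxy
      by_contra hlt
      push_neg at hlt
      have hne : x ≠ y := by
        have := hxy.nodup hvnd
        simp at this
        exact this
      have hylt : y < x := by omega
      have hx_lt := hv_lt x (hxy.subset (by simp))
      refine H321 ⟨n+1, x, y, ?_, hylt, by omega⟩
      exact (hxy.cons₂ (n+1)).trans (List.sublist_append_right u _)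
    have hune : u ≠ [] := by
      rintro rfl
      simp only [List.nil_append, List.head?_cons, Option.some.injEq] at hhead
      omega
    obtain ⟨c, u₀, rfl⟩ := List.exists_cons_of_ne_nil hune
    have hc : c = 1 := by simpa using hhead
    subst hc
    have hperm' : ((1 :: u₀) ++ v).Perm (range' 1 n) := by
      have h1 : ((1:ℕ) :: u₀) ++ (n+1) :: v ~ (n+1) :: ((1 :: u₀) ++ v) := List.perm_middle
      have h2 : range' 1 (n + 1) = range' 1 n ++ [n + 1] := by
        have := range1_concat 1 n
        rwa [show 1 + n = n + 1 from by omega] at this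
      have h3 : range' 1 (n+1) ~ (n+1) :: range' 1 n := by
        rw [h2]; exact List.perm_append_singleton _ _
      exact ((h1.symm.trans hperm).trans h3).cons_inv
    have hsubl : (1 :: u₀) ++ v <+ (1 :: u₀) ++ (n+1) :: v :=
      (List.sublist_cons_self (n+1) v).append_left _
    have hav' : Av ((1 :: u₀) ++ v) :=
      ⟨fun ⟨x,y,z,hs,h1,h2⟩ => H321 ⟨x,y,z,hs.trans hsubl,h1,h2⟩,
       fun ⟨x,y,z,hs,h1,h2⟩ => H213 ⟨x,y,z,hs.trans hsubl,h1,h2⟩⟩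
    obtain ⟨a, b, ha, hab, hb1, hbor, heq⟩ := IH _ hperm' (by simp) hav'
    rcases hbor with hb | ⟨han, hbn⟩
    · -- nontrivial case: b ≤ n
      rw [Fm] at heq
      have hXpw : (range' 1 a ++ range' b (n+1-b)).Pairwise (· < ·) := by
        rw [List.pairwise_append]
        refine ⟨List.pairwise_lt_range', List.pairwise_lt_range', ?_⟩
        intro x hx y hy
        have h1 := mem_range1 hx; have h2 := mem_range1 hy
        omega
      have hnB : n ∈ range' 1 a ++ range' b (n+1-b) :=
        List.mem_append_right _ (List.mem_range'.mpr ⟨n - b, by omega, by omega⟩)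
      have key : (1 :: u₀) = range' 1 a ++ range' b (n+1-b) ∧
          v = range' (a+1) (b-1-a) := by
        rcases List.append_eq_append_iff.mp heq with ⟨w, hX, hv⟩ | ⟨w, hu, hC⟩
        · rcases w with _ | ⟨c₀, w'⟩
          · exact ⟨by simpa using hX.symm, by simpa using hv⟩
          · exfalso
            rw [hX] at hnB
            rcases List.mem_append.mp hnB with hnu' | hnw
            · rw [hX] at hXpw
              have hcross := (List.pairwise_append.mp hXpw).2.2 n hnu' c₀ (by simp)
              have hc₀ : c₀ ∈ range' 1 a ++ range' b (n+1-b) := by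
                rw [hX]; exact List.mem_append_right _ (by simp)
              rcases List.mem_append.mp hc₀ with h | h
              · have := mem_range1 h; omega
              · have := mem_range1 h; omega
            · have hvpw := hv ▸ hv_inc
              have := (List.pairwise_append.mp hvpw).2.2 n hnw (a+1)
                (List.mem_range'.mpr ⟨0, by omega, by omega⟩)
              omega
        · rcases w with _ | ⟨c₀, w'⟩
          · refine ⟨by simpa using hu, ?_⟩
            simpa using hC.symm
          · exfalso
            have hupw := hu ▸ hu_inc
            have hcross := (List.pairwise_append.mp hupw).2.2 n hnB c₀ (by simp)
            have hc₀ : c₀ ∈ range' (a+1) (b-1-a) := by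
              rw [hC]; simp
            have := mem_range1 hc₀
            omega
      obtain ⟨hu_eq, hv_eq⟩ := key
      refine ⟨a, b, ha, hab, by omega, Or.inl (by omega), ?_⟩
      have hBext : range' b (n + 1 + 1 - b) = range' b (n+1-b) ++ [n+1] := by
        have h := range1_concat b (n + 1 - b)
        rw [show b + (n + 1 - b) = n + 1 from by omega] at h
        rw [show n + 1 + 1 - b = n + 1 - b + 1 from by omega, h]
      rw [Fm, hBext, hu_eq, hv_eq]
      simp [List.append_assoc]
    · -- identity case: l' = range' 1 n
      subst han; subst hbn
      rw [Fm_eq_id (by omega)] at heq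
      set j := (1 :: u₀).length with hj
      have hj1 : 1 ≤ j := by simp [hj]
      have hlen : j + v.length = n := by
        have := congrArg List.length heq
        simp [hj] at this ⊢
        omega
      have hsplit : range' 1 n = range' 1 j ++ range' (1+j) (n - j) := by
        have h := range1_append 1 j (n - j)
        rw [show j + (n - j) = n from by omega] at h
        exact h.symm
      obtain ⟨hu_eq, hv_eq⟩ := List.append_inj (heq.trans hsplit) (by simp [hj])
      rcases Nat.lt_or_ge j n with hjn | hjn
      · refine ⟨j, n + 1, by omega, by omega, by omega, Or.inl (by omega), ?_⟩
        rw [Fm, show n + 1 + 1 - (n + 1) = 1 from by omega,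
          show n + 1 - 1 - j = n - j from by omega, hu_eq, hv_eq]
        simp [List.range'_one, show (1:ℕ) + j = j + 1 from by omega, List.append_assoc]
      · have hjn' : j = n := by omega
        have hv_nil : v = [] := by
          rw [hv_eq, hjn']; simp
        refine ⟨n, n + 2, by omega, by omega, by omega, Or.inr ⟨by omega, rfl⟩, ?_⟩
        rw [Fm, show n + 1 + 1 - (n + 2) = 0 from by omega,
          show n + 2 - 1 - n = 1 from by omega, hu_eq, hv_nil, hjn']
        simp [List.range'_one]

/-! ### Counting -/

def FamP (n : ℕ) : Finset (ℕ × ℕ) :=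
  ((Finset.Icc 1 n) ×ˢ (Finset.Icc 1 (n+1))).filter
    (fun p => p.1 + 2 ≤ p.2 ∧ (p.2 ≤ n ∨ (p.1 = n - 1 ∧ p.2 = n + 1)))

lemma card_pairs (n : ℕ) :
    (((Finset.Icc 1 n) ×ˢ (Finset.Icc 1 n)).filter fun p : ℕ × ℕ => p.1 + 2 ≤ p.2).card
      = (n - 1).choose 2 := by
  induction n with
  | zero => decide
  | succ n ih =>
    have hsplit : ((Finset.Icc 1 (n+1)) ×ˢ (Finset.Icc 1 (n+1))).filter
          (fun p : ℕ × ℕ => p.1 + 2 ≤ p.2)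
        = (((Finset.Icc 1 n) ×ˢ (Finset.Icc 1 n)).filter fun p : ℕ × ℕ => p.1 + 2 ≤ p.2)
          ∪ (Finset.Icc 1 (n-1)) ×ˢ {n+1} := by
      ext ⟨x, y⟩
      simp only [Finset.mem_filter, Finset.mem_product, Finset.mem_Icc, Finset.mem_union,
        Finset.mem_singleton]
      omega
    have hdisj : Disjoint
        ((((Finset.Icc 1 n) ×ˢ (Finset.Icc 1 n)).filter fun p : ℕ × ℕ => p.1 + 2 ≤ p.2))
        ((Finset.Icc 1 (n-1)) ×ˢ {n+1}) := by
      rw [Finset.disjoint_left]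
      rintro ⟨x, y⟩ h1 h2
      simp only [Finset.mem_filter, Finset.mem_product, Finset.mem_Icc,
        Finset.mem_singleton] at h1 h2
      omega
    rw [hsplit, Finset.card_union_of_disjoint hdisj, ih, Finset.card_product, Nat.card_Icc,
      Finset.card_singleton]
    cases n with
    | zero => decide
    | succ m =>
      have h2 : (m+1).choose 2 = m.choose 1 + m.choose 2 := Nat.choose_succ_succ m 1
      simp only [Nat.succ_sub_one, Nat.add_sub_cancel, Nat.choose_one_right] at h2 ⊢
      omega

lemma FamP_card {n : ℕ} (hn : 2 ≤ n) : (FamP n).card = 1 + (n - 1).choose 2 := by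
  have hins : FamP n = insert (n - 1, n + 1)
      (((Finset.Icc 1 n) ×ˢ (Finset.Icc 1 n)).filter fun p : ℕ × ℕ => p.1 + 2 ≤ p.2) := by
    ext ⟨x, y⟩
    simp only [FamP, Finset.mem_filter, Finset.mem_product, Finset.mem_Icc, Finset.mem_insert,
      Prod.mk.injEq]
    omega
  rw [hins, Finset.card_insert_of_notMem, card_pairs]
  · omega
  · simp only [Finset.mem_filter, Finset.mem_product, Finset.mem_Icc]
    omega

/-! ### Injectivity -/

private lemma desc_sublist {n a b : ℕ} (hab : a + 2 ≤ b) (hb : b ≤ n) :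
    [n, a+1] <+ Fm n a b := by
  have hB : range' b (n + 1 - b) = range' b (n - b) ++ [n] := by
    have h := range1_concat b (n - b)
    rw [show b + (n - b) = n from by omega] at h
    rw [show n + 1 - b = n - b + 1 from by omega, h]
  have hC : range' (a+1) (b - 1 - a) = (a+1) :: range' (a+2) (b - 2 - a) := by
    rw [show b - 1 - a = (b - 2 - a) + 1 from by omega, List.range'_succ]
  have h1 : [n] <+ range' b (n + 1 - b) := by
    rw [hB]; exact List.sublist_append_right _ _
  have h2 : [a+1] <+ range' (a+1) (b - 1 - a) := by
    rw [hC]; exact (List.nil_sublist _).cons₂ _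
  have h3 : [n, a+1] <+ range' b (n + 1 - b) ++ range' (a+1) (b - 1 - a) := h1.append h2
  rw [Fm, List.append_assoc]
  exact h3.trans (List.sublist_append_right _ _)

private lemma Fm_ne_id {n a b : ℕ} (hab : a + 2 ≤ b) (hb : b ≤ n) :
    Fm n a b ≠ range' 1 n := by
  intro h
  have hsub : [n, a+1] <+ range' 1 n := h ▸ desc_sublist hab hb
  have := List.pairwise_iff_forall_sublist.mp (List.pairwise_lt_range' (s := 1) (n := n)) hsub
  omega

private lemma take_Fm {n a b : ℕ} (hab : a + 2 ≤ b) (hb : b ≤ n) :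
    (Fm n a b).take (a+1) = range' 1 a ++ [b] := by
  have hB : range' b (n + 1 - b) = b :: range' (b+1) (n - b) := by
    rw [show n + 1 - b = (n - b) + 1 from by omega, List.range'_succ]
  rw [Fm, List.append_assoc, List.take_append,
    List.take_of_length_le (by simp), List.length_range',
    show a + 1 - a = 1 from by omega, hB]
  simp

private lemma take_Fm_lt {n a a' b' : ℕ} (haa : a < a') :
    (Fm n a' b').take (a+1) = range' 1 a ++ [a+1] := by
  have hsplit : range' 1 a' = range' 1 (a+1) ++ range' (a+2) (a' - a - 1) := by
    have h := range1_append 1 (a+1) (a' - a - 1)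
    rw [show 1 + (a+1) = a + 2 from by omega, show (a+1) + (a' - a - 1) = a' from by omega] at h
    exact h.symm
  have hconcat : range' 1 (a+1) = range' 1 a ++ [a+1] := by
    have h := range1_concat 1 a
    rwa [show 1 + a = a + 1 from by omega] at h
  rw [Fm, List.append_assoc, List.take_append, List.length_range',
    show a + 1 - a' = 0 from by omega, List.take_zero, List.append_nil, hsplit,
    List.take_left' (by simp), hconcat]

lemma Fm_injOn {n : ℕ} (hn : 2 ≤ n) :
    Set.InjOn (fun p : ℕ × ℕ => Fm n p.1 p.2) (FamP n) := by
  rintro ⟨a, b⟩ h1 ⟨a', b'⟩ h2 heq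
  simp only [Finset.coe_filter, FamP, Set.mem_setOf_eq, Finset.mem_product, Finset.mem_Icc]
    at h1 h2
  simp only at heq
  obtain ⟨⟨⟨ha1, ha2⟩, hb1, hb2⟩, hab, hor⟩ := h1
  obtain ⟨⟨⟨ha1', ha2'⟩, hb1', hb2'⟩, hab', hor'⟩ := h2
  rcases hor with hbn | ⟨hane, hbne⟩
  · rcases hor' with hbn' | ⟨hane', hbne'⟩
    · -- both nontrivial
      have haa : a = a' := by
        rcases lt_trichotomy a a' with h | h | h
        · exfalso
          have e1 := take_Fm hab hbn
          have e2 := take_Fm_lt (n := n) (b' := b') h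
          rw [heq, e2] at e1
          have := List.append_cancel_left e1
          simp at this
          omega
        · exact h
        · exfalso
          have e1 := take_Fm hab' hbn'
          have e2 := take_Fm_lt (n := n) (b' := b) h
          rw [← heq, e2] at e1
          have := List.append_cancel_left e1
          simp at this
          omega
      subst haa
      have e1 := take_Fm hab hbn
      have e2 := take_Fm hab' hbn'
      rw [heq, e2] at e1
      have := List.append_cancel_left e1
      simp at this
      simp [this]
    · exfalso
      subst hane'; subst hbne'
      rw [Fm_eq_id (by omega)] at heq
      exact Fm_ne_id hab hbn heq
  · rcases hor' with hbn' | ⟨hane', hbne'⟩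
    · exfalso
      subst hane; subst hbne
      rw [Fm_eq_id (by omega)] at heq
      exact Fm_ne_id hab' hbn' heq.symm
    · simp [hane, hbne, hane', hbne']


/-- For `n ≥ 2`, the number of circular permutations of `[n]` avoiding both
`[1432]` and `[1324]` is `1 + C(n-1, 2)`. -/
theorem avoid_1432_1324_count (n : ℕ) (hn : 2 ≤ n) :
    {l : List ℕ | IsCirc n l ∧ ¬ CContains l [1, 4, 3, 2] ∧
      ¬ CContains l [1, 3, 2, 4]}.ncard = 1 + (n - 1).choose 2 := by
  have hset : {l : List ℕ | IsCirc n l ∧ ¬ CContains l [1, 4, 3, 2] ∧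
      ¬ CContains l [1, 3, 2, 4]}
      = ↑((FamP n).image (fun p : ℕ × ℕ => Fm n p.1 p.2)) := by
    ext l
    simp only [Set.mem_setOf_eq, Finset.coe_image, Set.mem_image, Finset.mem_coe]
    constructor
    · rintro ⟨⟨hperm, hhead⟩, hc1, hc2⟩
      have hav := av_of_not_ccontains hperm hhead hc1 hc2
      obtain ⟨a, b, ha, hab, hb1, hbor, rfl⟩ := classify n hn l hperm hhead hav
      refine ⟨(a, b), ?_, rfl⟩
      simp only [FamP, Finset.mem_filter, Finset.mem_product, Finset.mem_Icc]
      omega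
    · rintro ⟨⟨a, b⟩, hmem, rfl⟩
      simp only [FamP, Finset.mem_filter, Finset.mem_product, Finset.mem_Icc] at hmem
      have hav : Av (Fm n a b) := Fm_av (by omega)
      have h2 := not_ccontains_of_av hav
      exact ⟨⟨Fm_perm (by omega) (by omega) (by omega), Fm_head (by omega)⟩, h2.1, h2.2⟩
  rw [hset, Set.ncard_coe_finset, Finset.card_image_of_injOn (Fm_injOn hn), FamP_card hn]
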